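/- The maximum over (α1, α2) ∈ ℝ² of ℓ(α1, α2) + (1/2)·(z1ᵀ M⁻¹ z1 + z2ᵀ M⁻¹ z2) equals (1/2)·[ (v1ᵀ M⁻¹ z1 + v2ᵀ M⁻¹ z2)² + (v1ᵀ M⁻¹ z2 − v2ᵀ M⁻¹ z1)² ] / (v1ᵀ M⁻¹ v1 + v2ᵀ M⁻¹ v2), where ℓ(α1, α2) = −(1/2)·[ (z1 − m1(α1,α2))ᵀ M⁻¹ (z1 − m1(α1,α2)) + (z2 − m2(α1,α2))ᵀ M⁻¹ (z2 − m2(α1,α2)) ]. -/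

import Mathlib

open Matrix

/-- The (compressed) log-likelihood `ℓ(α1, α2)` for known covariance `M`. -/
noncomputable def ell {N : ℕ} (M : Matrix (Fin N) (Fin N) ℝ) (z1 z2 v1 v2 : Fin N → ℝ)
    (α1 α2 : ℝ) : ℝ :=
  -(1/2) * ((z1 - (α1 • v1 - α2 • v2)) ⬝ᵥ (M⁻¹ *ᵥ (z1 - (α1 • v1 - α2 • v2))) +
            (z2 - (α1 • v2 + α2 • v1)) ⬝ᵥ (M⁻¹ *ᵥ (z2 - (α1 • v2 + α2 • v1))))

/-- The maximum over `(α1, α2)` of `ℓ(α1, α2) + (1/2)(z1ᵀM⁻¹z1 + z2ᵀM⁻¹z2)` equals the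
closed-form expression (A.9). -/
theorem ell_max_value {N : ℕ} (hN : 1 ≤ N)
    (M : Matrix (Fin N) (Fin N) ℝ) (hM : M.PosDef)
    (z1 z2 v1 v2 : Fin N → ℝ) (hv : (v1, v2) ≠ (0, 0)) :
    IsGreatest
      (Set.range (fun p : ℝ × ℝ =>
        ell M z1 z2 v1 v2 p.1 p.2 + (1/2) * (z1 ⬝ᵥ (M⁻¹ *ᵥ z1) + z2 ⬝ᵥ (M⁻¹ *ᵥ z2))))
      ((1/2) * ((v1 ⬝ᵥ (M⁻¹ *ᵥ z1) + v2 ⬝ᵥ (M⁻¹ *ᵥ z2)) ^ 2 +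
          (v1 ⬝ᵥ (M⁻¹ *ᵥ z2) - v2 ⬝ᵥ (M⁻¹ *ᵥ z1)) ^ 2) /
        (v1 ⬝ᵥ (M⁻¹ *ᵥ v1) + v2 ⬝ᵥ (M⁻¹ *ᵥ v2))) := by
  have hWpd : (M⁻¹).PosDef := hM.inv
  have hWsymm : (M⁻¹)ᵀ = M⁻¹ := by
    rw [transpose_nonsing_inv]; congr 1; simpa using hM.1.eq
  have hswap : ∀ x y : Fin N → ℝ, x ⬝ᵥ (M⁻¹ *ᵥ y) = y ⬝ᵥ (M⁻¹ *ᵥ x) := fun x y => by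
    rw [dotProduct_mulVec, ← mulVec_transpose, hWsymm, dotProduct_comm]
  set p := v1 ⬝ᵥ (M⁻¹ *ᵥ z1) + v2 ⬝ᵥ (M⁻¹ *ᵥ z2) with hp
  set q := v1 ⬝ᵥ (M⁻¹ *ᵥ z2) - v2 ⬝ᵥ (M⁻¹ *ᵥ z1) with hq
  set a := v1 ⬝ᵥ (M⁻¹ *ᵥ v1) + v2 ⬝ᵥ (M⁻¹ *ᵥ v2) with ha
  have hpos : ∀ x : Fin N → ℝ, 0 ≤ x ⬝ᵥ (M⁻¹ *ᵥ x) := by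
    intro x
    rcases eq_or_ne x 0 with rfl | hx
    · simp
    · have := hWpd.dotProduct_mulVec_pos hx; simp at this; linarith
  have hapos : 0 < a := by
    have h1 : v1 ≠ 0 ∨ v2 ≠ 0 := by
      by_contra h
      push_neg at h
      exact hv (by simp [h.1, h.2])
    rcases h1 with h | h
    · have := hWpd.dotProduct_mulVec_pos h; simp at this
      have := hpos v2; rw [ha]; linarith
    · have := hWpd.dotProduct_mulVec_pos h; simp at this
      have := hpos v1; rw [ha]; linarith
  have key : ∀ α1 α2 : ℝ,
      ell M z1 z2 v1 v2 α1 α2 + (1/2) * (z1 ⬝ᵥ (M⁻¹ *ᵥ z1) + z2 ⬝ᵥ (M⁻¹ *ᵥ z2)) =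
      α1 * p + α2 * q - (1/2) * (α1^2 + α2^2) * a := by
    intro α1 α2
    simp only [ell, hp, hq, ha, dotProduct_sub, sub_dotProduct, dotProduct_add,
      add_dotProduct, mulVec_sub, mulVec_add, mulVec_smul, dotProduct_smul,
      smul_dotProduct, smul_eq_mul]
    linear_combination (α1 / 2) * hswap z1 v1 - (α2 / 2) * hswap z1 v2 +
      (α1 / 2) * hswap z2 v2 + (α2 / 2) * hswap z2 v1
  constructor
  · refine ⟨(p / a, q / a), ?_⟩
    show ell M z1 z2 v1 v2 (p / a) (q / a) + _ = _
    rw [key]; field_simp; ring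
  · rintro x ⟨⟨α1, α2⟩, rfl⟩
    show ell M z1 z2 v1 v2 α1 α2 + _ ≤ _
    rw [key, le_div_iff₀ hapos]
    clear_value p q a
    nlinarith [sq_nonneg (α1 * a - p), sq_nonneg (α2 * a - q), hapos]
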